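/- For every ordinal α < ε₀: if F_α is total then H_{ω^{3+α}} is total, and F_α(x) ≤ H_{ω^{3+α}}(x+3) ≤ F_α(x+4) for all x (whenever defined). -/

import Mathlib

/-- Tree ordinals as formal terms: `0`, and `ω^{t₁} + ⋯ + ω^{tₙ}` for tree
ordinals `t₁, …, tₙ` (no ordering condition on the exponents).
`oadd e r` denotes `r + ω^e`, i.e. `e` is the exponent of the **rightmost**
summand and `r` collects the summands to its left. -/
inductive T : Type where
  | zero : T
  | oadd : T → T → T
deriving DecidableEq

namespace T

/-- The induced ordinal `o(t)` of a tree term (ordinal arithmetic, so smaller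
summands may be absorbed). -/
noncomputable def o : T → Ordinal.{0}
  | zero => 0
  | oadd e r => o r + Ordinal.omega0 ^ o e

/-- The norm: `N0 = 0`, `N(ω^α + β) = 1 + Nα + Nβ`. -/
def norm : T → ℕ
  | zero => 0
  | oadd e r => 1 + norm e + norm r

/-- `rep e r x = r + ω^e · x`. -/
def rep (e r : T) : ℕ → T
  | 0 => r
  | x + 1 => oadd e (rep e r x)

/-- The standard fundamental sequences on tree terms:
`0[x] = 0`, `1[x] = 0`, `(t+1)[x] = t`, `(t + ω^{s+1})[x] = t + ω^s · x`,
`(t + ω^λ)[x] = t + ω^{λ[x]}` for a limit term `λ`. -/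
def fund : T → ℕ → T
  | zero, _ => zero
  | oadd zero r, _ => r
  | oadd (oadd zero e') r, x => rep e' r x
  | oadd (oadd (oadd a b) e') r, x => oadd (fund (oadd (oadd a b) e') x) r

/-- Auxiliary sum for the ordinal correction function: `crSum t m` adds
`N(ω^{tᵢ})` for each summand `ω^{tᵢ}` of `t` whose exponent is smaller (as an
ordinal) than some exponent strictly to its right (where `m` is the maximum of
the exponents lying to the right of all of `t`). -/
noncomputable def crSum : T → Ordinal.{0} → ℕ
  | zero, _ => 0
  | oadd e r, m => (if o e < m then 1 + norm e else 0) + crSum r (max m (o e))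

mutual
/-- The ordinal correction function `Cr`:
`Cr(0) = 0` and `Cr(t) = Σ {N(ω^{tᵢ}) : tᵢ < tⱼ for some j > i} + max Cr(tᵢ)`. -/
noncomputable def cr : T → ℕ
  | zero => 0
  | oadd e r => crSum (oadd e r) 0 + max (cr e) (crMax r)

/-- Maximum of `Cr` over the exponents of a term. -/
noncomputable def crMax : T → ℕ
  | zero => 0
  | oadd e r => max (cr e) (crMax r)
end

/-- Cantor normal form predicate: exponents are (weakly) increasing from the
rightmost summand leftwards, and all exponents are themselves in CNF.  Terms
satisfying `NF` faithfully represent the ordinals below `ε₀`. -/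
def NF : T → Prop
  | zero => True
  | oadd e r => NF e ∧ NF r ∧ (match r with | zero => True | oadd f _ => o e ≤ o f)

/-- A term is a limit iff its rightmost summand has nonzero exponent. -/
def IsLim : T → Prop
  | oadd (oadd _ _) _ => True
  | _ => False

/-- Drop rightmost summands with exponent of ordinal value `< b`
(the absorption performed by ordinal addition). -/
noncomputable def cleanup (b : Ordinal.{0}) : T → T
  | zero => zero
  | oadd f s => if o f < b then cleanup b s else oadd f s

/-- Normalization of a tree term to the Cantor normal form of its induced
ordinal: `toNF t` is `NF`, and `o (toNF t) = o t`. -/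
noncomputable def toNF : T → T
  | zero => zero
  | oadd e r => oadd (toNF e) (cleanup (o e) (toNF r))

/-- `repOne r x = r + x`. -/
def repOne (r : T) : ℕ → T
  | 0 => r
  | x + 1 => oadd zero (repOne r x)

/-- `repPair s r x = r + (ω^s + 1) · x`. -/
def repPair (s r : T) : ℕ → T
  | 0 => r
  | x + 1 => oadd zero (oadd s (repPair s r x))

/-- The worm-induced fundamental sequences `⟦·⟧` on tree terms:
`0⟦x⟧ = 0`, `(t+1)⟦x⟧ = t`, `(t+ω)⟦x⟧ = t + x`,
`(t + ω^{s+1})⟦x⟧ = t + (ω^s + 1) · x` for `s ≠ 0`, and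
`(t + ω^λ)⟦x⟧ = t + ω^{λ⟦x⟧}` for a limit term `λ`. -/
def fundW : T → ℕ → T
  | zero, _ => zero
  | oadd zero r, _ => r
  | oadd (oadd zero zero) r, x => repOne r x
  | oadd (oadd zero (oadd a b)) r, x => repPair (oadd a b) r x
  | oadd (oadd (oadd a b) e') r, x => oadd (fundW (oadd (oadd a b) e') x) r

end T

/-- Graph of the Hardy functions (with the standard fundamental sequences):
`H_0(x) = x`, `H_{t+1}(x) = H_t(x+1)`, `H_t(x) = H_{t[x]}(x)` for limit `t`.
`HG t x y` means `H_t(x)` is defined with value `y`. -/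
inductive HG : T → ℕ → ℕ → Prop where
  | zero (x) : HG T.zero x x
  | succ {r x y} : HG r (x + 1) y → HG (T.oadd T.zero r) x y
  | lim {e r x y} (he : e ≠ T.zero) :
      HG (T.fund (T.oadd e r) x) x y → HG (T.oadd e r) x y

/-- The superexponential: `2^x_0 = x`, `2^x_{n+1} = 2^(2^x_n)`. -/
def superexp (x : ℕ) : ℕ → ℕ
  | 0 => x
  | n + 1 => 2 ^ superexp x n

mutual
/-- Graph of the fast-growing hierarchy: `F_0(x) = 2^x_x`,
`F_{α+1}(x) = F_α^{(x)}(x)`, `F_λ(x) = F_{λ[x]}(x)` for limit `λ`. -/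
inductive FG : T → ℕ → ℕ → Prop where
  | zero (x) : FG T.zero x (superexp x x)
  | succ {t x y} : FGit t x x y → FG (T.oadd T.zero t) x y
  | lim {e t x y} (he : e ≠ T.zero) :
      FG (T.fund (T.oadd e t) x) x y → FG (T.oadd e t) x y

/-- `FGit t k z y` means `F_t^{(k)}(z) = y`. -/
inductive FGit : T → ℕ → ℕ → ℕ → Prop where
  | zero (t z) : FGit t 0 z z
  | succ {t k z w y} : FGit t k z w → FG t w y → FGit t (k + 1) z y
end

/-- Formal addition of tree terms: `addT u v = u + v` (concatenation of the
lists of summands, `v` to the right). -/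
def addT : T → T → T
  | u, T.zero => u
  | u, T.oadd e r => T.oadd e (addT u r)

/-- The tree term `3`. -/
def three : T := T.oadd T.zero (T.oadd T.zero (T.oadd T.zero T.zero))

/-- The Cantor normal form term for the ordinal `ω^{3+α}`. -/
noncomputable def wexp3 (t : T) : T := T.oadd (T.toNF (addT three t)) T.zero

namespace T

open Ordinal

@[simp] lemma o_zero : o zero = 0 := rfl
@[simp] lemma o_oadd (e r : T) : o (oadd e r) = o r + omega0 ^ o e := rfl

lemma o_pos {t : T} (h : t ≠ zero) : 0 < o t := by
  cases t with
  | zero => exact absurd rfl h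
  | oadd e r =>
    have : (0:Ordinal) < omega0 ^ o e := opow_pos _ omega0_pos
    calc (0:Ordinal) < omega0 ^ o e := this
    _ ≤ o r + omega0 ^ o e := le_add_self

lemma o_eq_zero_iff {t : T} : o t = 0 ↔ t = zero := by
  constructor
  · intro h
    by_contra hne
    exact absurd h (o_pos hne).ne'
  · rintro rfl; rfl

@[simp] lemma fund_succ (r : T) (x : ℕ) : fund (oadd zero r) x = r := rfl
@[simp] lemma fund_limS (e' r : T) (x : ℕ) :
    fund (oadd (oadd zero e') r) x = rep e' r x := rfl
@[simp] lemma fund_limL (a b e' r : T) (x : ℕ) :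
    fund (oadd (oadd (oadd a b) e') r) x = oadd (fund (oadd (oadd a b) e') x) r := rfl

lemma o_rep (e r : T) (k : ℕ) : o (rep e r k) = o r + omega0 ^ o e * k := by
  induction k with
  | zero => simp [rep]
  | succ k ih =>
    show o (rep e r k) + omega0 ^ o e = _
    rw [ih, Nat.cast_succ, mul_add, mul_one, add_assoc]

lemma o_fund_lt : ∀ (t : T), t ≠ zero → ∀ x, o (fund t x) < o t := by
  intro t
  induction t with
  | zero => intro h; exact absurd rfl h
  | oadd e r ihe ihr =>
    intro _ x
    cases e with
    | zero =>
      simp only [fund_succ, o_oadd, o_zero, opow_zero]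
      simpa using (add_lt_add_iff_left (o r)).mpr zero_lt_one
    | oadd e1 e2 =>
      cases e1 with
      | zero =>
        simp only [fund_limS, o_rep, o_oadd, o_zero, opow_zero]
        refine (add_lt_add_iff_left (o r)).mpr ?_
        calc omega0 ^ o e2 * (x:Ordinal) < omega0 ^ o e2 * omega0 :=
          mul_lt_mul_of_pos_left (nat_lt_omega0 x) (opow_pos _ omega0_pos)
        _ = omega0 ^ (o e2 + 1) := by rw [opow_add, opow_one]
      | oadd a b =>
        simp only [fund_limL, o_oadd]
        refine (add_lt_add_iff_left (o r)).mpr ?_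
        refine (opow_lt_opow_iff_right one_lt_omega0).mpr ?_
        have := ihe (by simp) x
        simpa using this

lemma fund_ne_zero : ∀ (e : T), IsLim e → ∀ x, 1 ≤ x → fund e x ≠ zero := by
  intro e he x hx
  cases e with
  | zero => exact absurd he (by simp [IsLim])
  | oadd f g =>
    cases f with
    | zero => exact absurd he (by simp [IsLim])
    | oadd f1 f2 =>
      cases f1 with
      | zero =>
        cases x with
        | zero => omega
        | succ x => simp only [fund_limS]; show oadd _ _ ≠ zero; simp [rep]
      | oadd a b => simp

end T
namespace T

@[simp] lemma addT_zero (u : T) : addT u zero = u := rfl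
@[simp] lemma addT_oadd (u e r : T) : addT u (oadd e r) = oadd e (addT u r) := rfl

lemma rep_addT (e' u r : T) (x : ℕ) :
    rep e' (addT u r) x = addT u (rep e' r x) := by
  induction x with
  | zero => rfl
  | succ x ih => show oadd e' (rep e' (addT u r) x) = _; rw [ih]; rfl

lemma fund_addT (e u r : T) (x : ℕ) :
    fund (oadd e (addT u r)) x = addT u (fund (oadd e r) x) := by
  cases e with
  | zero => rfl
  | oadd e1 e2 =>
    cases e1 with
    | zero => simp [rep_addT]
    | oadd a b => simp

end T

open T

lemma HG_total : ∀ (γ : Ordinal) (t : T), t.o = γ → ∀ x, ∃ y, HG t x y := by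
  intro γ
  induction γ using Ordinal.induction with
  | h γ IH =>
    intro t ht x
    cases t with
    | zero => exact ⟨x, HG.zero x⟩
    | oadd e r =>
      cases e with
      | zero =>
        obtain ⟨y, hy⟩ := IH (o r) (by rw [← ht]; exact o_fund_lt _ (by simp) x) r rfl (x+1)
        exact ⟨y, HG.succ hy⟩
      | oadd e1 e2 =>
        obtain ⟨y, hy⟩ := IH (o (fund (oadd (oadd e1 e2) r) x))
          (by rw [← ht]; exact o_fund_lt _ (by simp) x) _ rfl x
        exact ⟨y, HG.lim (by simp) hy⟩

lemma HG_unique : ∀ (γ : Ordinal) (t : T), t.o = γ →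
    ∀ x y y', HG t x y → HG t x y' → y = y' := by
  intro γ
  induction γ using Ordinal.induction with
  | h γ IH =>
    intro t ht x y y' h1 h2
    cases h1 with
    | zero => cases h2 with
      | zero => rfl
    | @succ r _ _ h1' =>
      cases h2 with
      | succ h2' =>
        exact IH (o r) (by rw [← ht]; exact o_fund_lt _ (by simp) x) r rfl _ _ _ h1' h2'
      | lim he _ => exact absurd rfl he
    | @lim e r _ _ he h1' =>
      cases h2 with
      | succ h2' => exact absurd rfl he
      | lim he2 h2' =>
        exact IH (o (fund (oadd e r) x)) (by rw [← ht]; exact o_fund_lt _ (by simp) x)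
          _ rfl _ _ _ h1' h2'

noncomputable def H (t : T) (x : ℕ) : ℕ := (HG_total (o t) t rfl x).choose

lemma HG_H (t : T) (x : ℕ) : HG t x (H t x) := (HG_total (o t) t rfl x).choose_spec

lemma HG_eq_H {t : T} {x y : ℕ} (h : HG t x y) : y = H t x :=
  HG_unique (o t) t rfl x y (H t x) h (HG_H t x)

@[simp] lemma H_zero (x : ℕ) : H zero x = x := (HG_eq_H (HG.zero x)).symm

lemma H_succ (r : T) (x : ℕ) : H (oadd zero r) x = H r (x+1) :=
  (HG_eq_H (HG.succ (HG_H r (x+1)))).symm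

lemma H_lim {e : T} (he : e ≠ zero) (r : T) (x : ℕ) :
    H (oadd e r) x = H (fund (oadd e r) x) x :=
  (HG_eq_H (HG.lim he (HG_H _ x))).symm

lemma le_H : ∀ (γ : Ordinal) (t : T), t.o = γ → ∀ x, x ≤ H t x := by
  intro γ
  induction γ using Ordinal.induction with
  | h γ IH =>
    intro t ht x
    cases t with
    | zero => simp
    | oadd e r =>
      cases e with
      | zero =>
        rw [H_succ]
        calc x ≤ x + 1 := Nat.le_succ x
        _ ≤ _ := IH (o r) (by rw [← ht]; exact o_fund_lt _ (by simp) x) r rfl (x+1)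
      | oadd e1 e2 =>
        rw [H_lim (by simp)]
        exact IH _ (by rw [← ht]; exact o_fund_lt _ (by simp) x) _ rfl x

lemma H_addT (u : T) : ∀ (γ : Ordinal) (v : T), v.o = γ →
    ∀ z, H (addT u v) z = H u (H v z) := by
  intro γ
  induction γ using Ordinal.induction with
  | h γ IH =>
    intro v hv z
    cases v with
    | zero => simp
    | oadd e r =>
      cases e with
      | zero =>
        rw [addT_oadd, H_succ, H_succ,
          IH (o r) (by rw [← hv]; exact o_fund_lt _ (by simp) z) r rfl]
      | oadd e1 e2 =>
        rw [addT_oadd, H_lim (by simp), H_lim (by simp), fund_addT,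
          IH _ (by rw [← hv]; exact o_fund_lt (oadd (oadd e1 e2) r) (by simp) z) _ rfl]
namespace T

/-- `s` is reachable from `t` by fundamental-sequence steps with indices `≤ x`. -/
inductive le (x : ℕ) : T → T → Prop where
  | refl (t) : le x t t
  | step {s t : T} (m : ℕ) (hm : m ≤ x) (ht : t ≠ zero) (h : le x s (fund t m)) : le x s t

lemma le.trans {x : ℕ} {s t u : T} (h1 : le x s t) (h2 : le x t u) : le x s u := by
  induction h2 with
  | refl => exact h1
  | step m hm ht _ ih => exact le.step m hm ht ih

lemma le_oadd : ∀ (γ : Ordinal) (e : T), e.o = γ → ∀ (u : T) (x : ℕ), le x u (oadd e u) := by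
  intro γ
  induction γ using Ordinal.induction with
  | h γ IH =>
    intro e he u x
    cases e with
    | zero => exact le.step 0 (Nat.zero_le x) (by simp) (le.refl u)
    | oadd e1 e2 =>
      cases e1 with
      | zero => exact le.step 0 (Nat.zero_le x) (by simp) (le.refl u)
      | oadd a b =>
        refine le.step 0 (Nat.zero_le x) (by simp) ?_
        simp only [fund_limL]
        exact IH _ (by rw [← he]; exact o_fund_lt _ (by simp) 0) _ rfl u x

lemma le_oadd' (e u : T) (x : ℕ) : le x u (oadd e u) := le_oadd (o e) e rfl u x

lemma le_rep (e r : T) {a b : ℕ} (h : a ≤ b) (x : ℕ) : le x (rep e r a) (rep e r b) := by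
  induction b with
  | zero => obtain rfl : a = 0 := Nat.le_zero.mp h; exact le.refl _
  | succ b ih =>
    rcases Nat.lt_or_ge a (b+1) with hlt | hge
    · exact (ih (Nat.lt_succ_iff.mp hlt)).trans (le_oadd' e (rep e r b) x)
    · obtain rfl : a = b + 1 := le_antisymm h hge
      exact le.refl _

lemma le_congr_oadd {w : ℕ} (hw : 1 ≤ w) {a b : T} (h : le w a b) (r : T) :
    le w (oadd a r) (oadd b r) := by
  induction h with
  | refl => exact le.refl _
  | @step t m hm ht h ih =>
    refine ih.trans ?_
    cases t with
    | zero => exact absurd rfl ht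
    | oadd t1 t2 =>
      cases t1 with
      | zero =>
        refine le.step 1 hw (by simp) ?_
        simp only [fund_limS]
        show le w (oadd t2 r) (rep t2 r 1)
        exact le.refl _
      | oadd a' b' =>
        exact le.step m hm (by simp) (by simp only [fund_limL]; exact le.refl _)

/-- Bachmann-style property. -/
lemma le_fund_fund : ∀ (t : T) {a b w : ℕ}, a ≤ b → 1 ≤ w → le w (fund t a) (fund t b) := by
  intro t
  induction t with
  | zero => intro a b w _ _; exact le.refl _
  | oadd e r ihe ihr =>
    intro a b w hab hw
    cases e with
    | zero => exact le.refl _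
    | oadd e1 e2 =>
      cases e1 with
      | zero => exact le_rep e2 r hab w
      | oadd a' b' =>
        simp only [fund_limL]
        exact le_congr_oadd hw (ihe hab hw) r

lemma H_le_mono : ∀ (γ : Ordinal) (t : T), t.o = γ →
    (∀ s x z, le x s t → x ≤ z → H s z ≤ H t z) ∧
    (∀ x y, x ≤ y → H t x ≤ H t y) := by
  intro γ
  induction γ using Ordinal.induction with
  | h γ IH =>
    intro t ht
    constructor
    · intro s x z hle hxz
      cases hle with
      | refl => exact Nat.le_refl _
      | step m hm htne h =>
        have h1 : H s z ≤ H (fund t m) z :=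
          (IH _ (by rw [← ht]; exact o_fund_lt t htne m) _ rfl).1 s x z h hxz
        refine h1.trans ?_
        cases t with
        | zero => exact absurd rfl htne
        | oadd e r =>
          cases e with
          | zero =>
            rw [H_succ]
            exact (IH _ (by rw [← ht]; exact o_fund_lt (oadd zero r) (by simp) 0) r rfl).2
              z (z+1) (Nat.le_succ z)
          | oadd e1 e2 =>
            rw [H_lim (by simp)]
            rcases Nat.lt_or_ge m z with hmz | hmz
            · have hk : le z (fund (oadd (oadd e1 e2) r) m) (fund (oadd (oadd e1 e2) r) z) :=
                le_fund_fund _ (Nat.le_of_lt hmz) (Nat.one_le_iff_ne_zero.mpr (by omega))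
              exact (IH _ (by rw [← ht]; exact o_fund_lt _ (by simp) z) _ rfl).1
                _ z z hk (Nat.le_refl z)
            · obtain rfl : m = z := le_antisymm (hm.trans hxz) hmz
              exact Nat.le_refl _
    · intro x y hxy
      cases t with
      | zero => simp [hxy]
      | oadd e r =>
        cases e with
        | zero =>
          rw [H_succ, H_succ]
          exact (IH _ (by rw [← ht]; exact o_fund_lt (oadd zero r) (by simp) 0) r rfl).2
            _ _ (Nat.succ_le_succ hxy)
        | oadd e1 e2 =>
          rw [H_lim (by simp), H_lim (by simp)]
          have h1 : H (fund (oadd (oadd e1 e2) r) x) x ≤ H (fund (oadd (oadd e1 e2) r) x) y :=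
            (IH _ (by rw [← ht]; exact o_fund_lt _ (by simp) x) _ rfl).2 x y hxy
          refine h1.trans ?_
          rcases Nat.lt_or_ge x y with hlt | hge
          · have hk : le y (fund (oadd (oadd e1 e2) r) x) (fund (oadd (oadd e1 e2) r) y) :=
              le_fund_fund _ hxy (by omega)
            exact (IH _ (by rw [← ht]; exact o_fund_lt _ (by simp) y) _ rfl).1
              _ y y hk (Nat.le_refl y)
          · obtain rfl : x = y := le_antisymm hxy hge
            exact Nat.le_refl _

lemma H_mono (t : T) {x y : ℕ} (h : x ≤ y) : H t x ≤ H t y :=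
  (H_le_mono (o t) t rfl).2 x y h

lemma H_le_of_le {s t : T} {x z : ℕ} (h : le x s t) (hxz : x ≤ z) : H s z ≤ H t z :=
  (H_le_mono (o t) t rfl).1 s x z h hxz

end T
open T

section SuperexpLemmas

@[simp] lemma superexp_zero (x : ℕ) : superexp x 0 = x := rfl
@[simp] lemma superexp_succ (x n : ℕ) : superexp x (n+1) = 2 ^ superexp x n := rfl

lemma superexp_mono_n (x : ℕ) {m n : ℕ} (h : m ≤ n) : superexp x m ≤ superexp x n := by
  induction n with
  | zero => obtain rfl : m = 0 := Nat.le_zero.mp h; exact Nat.le_refl _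
  | succ n ih =>
    rcases Nat.lt_or_ge m (n+1) with hlt | hge
    · exact (ih (Nat.lt_succ_iff.mp hlt)).trans (Nat.le_of_lt (superexp x n).lt_two_pow_self)
    · obtain rfl : m = n + 1 := le_antisymm h hge
      exact Nat.le_refl _

lemma le_superexp (x n : ℕ) : x ≤ superexp x n := superexp_mono_n x (Nat.zero_le n)

lemma superexp_mono_x {x y : ℕ} (h : x ≤ y) (n : ℕ) : superexp x n ≤ superexp y n := by
  induction n with
  | zero => exact h
  | succ n ih => exact Nat.pow_le_pow_right (by norm_num) ih

lemma superexp_shift {b c : ℕ} (h : b ≤ 2 ^ c) (k : ℕ) :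
    superexp b k ≤ superexp c (k+1) := by
  induction k with
  | zero => exact h
  | succ k ih => exact Nat.pow_le_pow_right (by norm_num) ih

lemma two_mul_le_two_pow {a : ℕ} (h : 2 ≤ a) : 2 * a ≤ 2 ^ a := by
  induction a with
  | zero => omega
  | succ a ih =>
    rcases Nat.lt_or_ge a 2 with h2 | h2
    · interval_cases a <;> simp_all
    · have := ih h2
      have h2a : (2:ℕ) ≤ 2 ^ a := by
        calc 2 ≤ 2 * a := by omega
        _ ≤ 2 ^ a := this
      calc 2 * (a+1) = 2 * a + 2 := by ring
      _ ≤ 2 ^ a + 2 ^ a := by omega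
      _ = 2 ^ (a+1) := by ring

end SuperexpLemmas

section IterLemmas

variable {f : ℕ → ℕ}

lemma iter_ge (hf : ∀ z, z ≤ f z) (k z : ℕ) : z ≤ f^[k] z := by
  induction k with
  | zero => simp
  | succ k ih => rw [Function.iterate_succ_apply']; exact ih.trans (hf _)

lemma iter_mono (hf : ∀ {a b : ℕ}, a ≤ b → f a ≤ f b) (k : ℕ) {a b : ℕ} (h : a ≤ b) :
    f^[k] a ≤ f^[k] b := by
  induction k with
  | zero => simpa
  | succ k ih => rw [Function.iterate_succ_apply', Function.iterate_succ_apply']; exact hf ih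

lemma iter_count_mono (hf : ∀ z, z ≤ f z) {j k : ℕ} (h : j ≤ k) (z : ℕ) :
    f^[j] z ≤ f^[k] z := by
  induction k with
  | zero => obtain rfl : j = 0 := Nat.le_zero.mp h; exact Nat.le_refl _
  | succ k ih =>
    rcases Nat.lt_or_ge j (k+1) with hlt | hge
    · refine (ih (Nat.lt_succ_iff.mp hlt)).trans ?_
      rw [Function.iterate_succ_apply']; exact hf _
    · obtain rfl : j = k + 1 := le_antisymm h hge
      exact Nat.le_refl _

end IterLemmas

section Fdef

lemma FG_total : ∀ (γ : Ordinal) (t : T), t.o = γ → ∀ x, ∃ y, FG t x y := by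
  intro γ
  induction γ using Ordinal.induction with
  | h γ IH =>
    intro t ht x
    cases t with
    | zero => exact ⟨_, FG.zero x⟩
    | oadd e r =>
      cases e with
      | zero =>
        have hit : ∀ k z, ∃ y, FGit r k z y := by
          intro k
          induction k with
          | zero => exact fun z => ⟨z, FGit.zero r z⟩
          | succ k ihk =>
            intro z
            obtain ⟨w, hw⟩ := ihk z
            obtain ⟨y, hy⟩ := IH (o r) (by rw [← ht]; exact o_fund_lt _ (by simp) x) r rfl w
            exact ⟨y, FGit.succ hw hy⟩
        obtain ⟨y, hy⟩ := hit x x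
        exact ⟨y, FG.succ hy⟩
      | oadd e1 e2 =>
        obtain ⟨y, hy⟩ := IH (o (fund (oadd (oadd e1 e2) r) x))
          (by rw [← ht]; exact o_fund_lt _ (by simp) x) _ rfl x
        exact ⟨y, FG.lim (by simp) hy⟩

lemma FG_unique : ∀ (γ : Ordinal) (t : T), t.o = γ →
    ∀ x y y', FG t x y → FG t x y' → y = y' := by
  intro γ
  induction γ using Ordinal.induction with
  | h γ IH =>
    intro t ht x y y' h1 h2
    cases h1 with
    | zero => cases h2 with
      | zero => rfl
    | @succ r _ _ h1' =>
      cases h2 with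
      | succ h2' =>
        have hr : ∀ δ, δ < γ → δ = o r → True := fun _ _ _ => trivial
        have key : ∀ k z w w', FGit r k z w → FGit r k z w' → w = w' := by
          intro k
          induction k with
          | zero =>
            intro z w w' hw hw'
            cases hw; cases hw'; rfl
          | succ k ihk =>
            intro z w w' hw hw'
            cases hw with
            | succ ha hb =>
              cases hw' with
              | succ ha' hb' =>
                obtain rfl := ihk _ _ _ ha ha'
                exact IH (o r) (by rw [← ht]; exact o_fund_lt _ (by simp) x) r rfl
                  _ _ _ hb hb'
        exact key _ _ _ _ h1' h2'
      | lim he _ => exact absurd rfl he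
    | @lim e r _ _ he h1' =>
      cases h2 with
      | succ h2' => exact absurd rfl he
      | lim he2 h2' =>
        exact IH (o (fund (oadd e r) x)) (by rw [← ht]; exact o_fund_lt _ (by simp) x)
          _ rfl _ _ _ h1' h2'

noncomputable def F (t : T) (x : ℕ) : ℕ := (FG_total (o t) t rfl x).choose

lemma FG_F (t : T) (x : ℕ) : FG t x (F t x) := (FG_total (o t) t rfl x).choose_spec

lemma FG_eq_F {t : T} {x y : ℕ} (h : FG t x y) : y = F t x :=
  FG_unique (o t) t rfl x y (F t x) h (FG_F t x)

@[simp] lemma F_zero (x : ℕ) : F T.zero x = superexp x x := (FG_eq_F (FG.zero x)).symm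

lemma FGit_iter (s : T) (k z : ℕ) : FGit s k z ((F s)^[k] z) := by
  induction k with
  | zero => exact FGit.zero s z
  | succ k ih =>
    rw [Function.iterate_succ_apply']
    exact FGit.succ ih (FG_F s _)

lemma F_succ (s : T) (x : ℕ) : F (oadd T.zero s) x = (F s)^[x] x :=
  (FG_eq_F (FG.succ (FGit_iter s x x))).symm

lemma F_lim {e : T} (he : e ≠ T.zero) (r : T) (x : ℕ) :
    F (oadd e r) x = F (fund (oadd e r) x) x :=
  (FG_eq_F (FG.lim he (FG_F _ x))).symm

end Fdef
open T

lemma F_arg_zero : ∀ (γ : Ordinal) (t : T), t.o = γ → F t 0 = 0 := by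
  intro γ
  induction γ using Ordinal.induction with
  | h γ IH =>
    intro t ht
    cases t with
    | zero => simp [superexp]
    | oadd e r =>
      cases e with
      | zero => rw [F_succ]; simp
      | oadd e1 e2 =>
        rw [F_lim (by simp)]
        exact IH _ (by rw [← ht]; exact o_fund_lt _ (by simp) 0) _ rfl

lemma le_F : ∀ (γ : Ordinal) (t : T), t.o = γ → ∀ z, z ≤ F t z := by
  intro γ
  induction γ using Ordinal.induction with
  | h γ IH =>
    intro t ht z
    cases t with
    | zero => rw [F_zero]; exact le_superexp z z
    | oadd e r =>
      cases e with
      | zero =>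
        rw [F_succ]
        exact iter_ge (IH (o r) (by rw [← ht]; exact o_fund_lt _ (by simp) 0) r rfl) z z
      | oadd e1 e2 =>
        rw [F_lim (by simp)]
        exact IH _ (by rw [← ht]; exact o_fund_lt _ (by simp) z) _ rfl z

lemma le_F' (t : T) (z : ℕ) : z ≤ F t z := le_F (o t) t rfl z

lemma F_ge_succ : ∀ (γ : Ordinal) (t : T), t.o = γ → ∀ y, 1 ≤ y → y + 1 ≤ F t y := by
  intro γ
  induction γ using Ordinal.induction with
  | h γ IH =>
    intro t ht y hy
    cases t with
    | zero =>
      rw [F_zero]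
      calc y + 1 ≤ 2 ^ y := by
            have := y.lt_two_pow_self; omega
      _ = superexp y 1 := rfl
      _ ≤ superexp y y := superexp_mono_n y hy
    | oadd e r =>
      cases e with
      | zero =>
        rw [F_succ]
        obtain ⟨k, rfl⟩ := Nat.exists_eq_add_of_le hy
        rw [Nat.add_comm 1 k, Function.iterate_succ_apply]
        have h1 : k + 1 + 1 ≤ F r (k+1) :=
          IH (o r) (by rw [← ht]; exact o_fund_lt _ (by simp) 0) r rfl (k+1) (by omega)
        calc k + 1 + 1 ≤ F r (k+1) := h1
        _ ≤ (F r)^[k] (F r (k+1)) := iter_ge (le_F' r) k _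
      | oadd e1 e2 =>
        rw [F_lim (by simp)]
        exact IH _ (by rw [← ht]; exact o_fund_lt _ (by simp) y) _ rfl y hy

lemma F_ge_succ' (t : T) {y : ℕ} (hy : 1 ≤ y) : y + 1 ≤ F t y := F_ge_succ (o t) t rfl y hy

lemma F_le_mono : ∀ (γ : Ordinal) (t : T), t.o = γ →
    (∀ s x z, le x s t → x ≤ z → F s z ≤ F t z) ∧
    (∀ x y, x ≤ y → F t x ≤ F t y) := by
  intro γ
  induction γ using Ordinal.induction with
  | h γ IH =>
    intro t ht
    constructor
    · intro s x z hle hxz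
      cases hle with
      | refl => exact Nat.le_refl _
      | step m hm htne h =>
        have h1 : F s z ≤ F (fund t m) z :=
          (IH _ (by rw [← ht]; exact o_fund_lt t htne m) _ rfl).1 s x z h hxz
        refine h1.trans ?_
        cases t with
        | zero => exact absurd rfl htne
        | oadd e r =>
          cases e with
          | zero =>
            rw [F_succ]
            show F r z ≤ (F r)^[z] z
            cases z with
            | zero => rw [F_arg_zero (o r) r rfl]; simp
            | succ z =>
              rw [Function.iterate_succ_apply']
              refine (IH _ (by rw [← ht]; exact o_fund_lt (oadd zero r) (by simp) 0) r rfl).2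
                _ _ (iter_ge (le_F' r) z (z+1))
          | oadd e1 e2 =>
            rw [F_lim (by simp)]
            rcases Nat.lt_or_ge m z with hmz | hmz
            · have hk : le z (fund (oadd (oadd e1 e2) r) m) (fund (oadd (oadd e1 e2) r) z) :=
                le_fund_fund _ (Nat.le_of_lt hmz) (by omega)
              exact (IH _ (by rw [← ht]; exact o_fund_lt _ (by simp) z) _ rfl).1
                _ z z hk (Nat.le_refl z)
            · obtain rfl : m = z := le_antisymm (hm.trans hxz) hmz
              exact Nat.le_refl _
    · intro x y hxy
      cases t with
      | zero =>
        rw [F_zero, F_zero]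
        exact (superexp_mono_x hxy x).trans (superexp_mono_n y hxy)
      | oadd e r =>
        cases e with
        | zero =>
          rw [F_succ, F_succ]
          have hm := (IH _ (by rw [← ht]; exact o_fund_lt (oadd zero r) (by simp) 0) r rfl).2
          calc (F r)^[x] x ≤ (F r)^[x] y := iter_mono (fun h => hm _ _ h) x hxy
          _ ≤ (F r)^[y] y := iter_count_mono (le_F' r) hxy y
        | oadd e1 e2 =>
          rw [F_lim (by simp), F_lim (by simp)]
          have h1 : F (fund (oadd (oadd e1 e2) r) x) x ≤ F (fund (oadd (oadd e1 e2) r) x) y :=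
            (IH _ (by rw [← ht]; exact o_fund_lt _ (by simp) x) _ rfl).2 x y hxy
          refine h1.trans ?_
          rcases Nat.lt_or_ge x y with hlt | hge
          · have hk : le y (fund (oadd (oadd e1 e2) r) x) (fund (oadd (oadd e1 e2) r) y) :=
              le_fund_fund _ hxy (by omega)
            exact (IH _ (by rw [← ht]; exact o_fund_lt _ (by simp) y) _ rfl).1
              _ y y hk (Nat.le_refl y)
          · obtain rfl : x = y := le_antisymm hxy hge
            exact Nat.le_refl _

lemma F_mono (t : T) {x y : ℕ} (h : x ≤ y) : F t x ≤ F t y :=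
  (F_le_mono (o t) t rfl).2 x y h

lemma F_le_of_le {s t : T} {x z : ℕ} (h : le x s t) (hxz : x ≤ z) : F s z ≤ F t z :=
  (F_le_mono (o t) t rfl).1 s x z h hxz
open T

noncomputable def Beta (t : T) : T := T.toNF (addT three t)

lemma wexp3_eq (t : T) : wexp3 t = oadd (Beta t) T.zero := rfl

namespace T
open Ordinal

lemma cleanup_oadd (b : Ordinal) (f s : T) :
    cleanup b (oadd f s) = if o f < b then cleanup b s else oadd f s := rfl

@[simp] lemma cleanup_zeroT (b : Ordinal) : cleanup b zero = zero := rfl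

lemma cleanup_zero (t : T) : cleanup 0 t = t := by
  induction t with
  | zero => rfl
  | oadd f s ih => rw [cleanup_oadd, if_neg (by simp)]

lemma cleanup_keep {b : Ordinal} {f : T} (h : b ≤ o f) (s : T) :
    cleanup b (oadd f s) = oadd f s := by
  rw [cleanup_oadd, if_neg (not_lt.mpr h)]

lemma three_eq : three = rep zero zero 3 := rfl

lemma cleanup_term {b : Ordinal} (hb : 0 < b) (n : ℕ) :
    cleanup b (rep zero zero n) = zero := by
  induction n with
  | zero => rfl
  | succ n ih => show cleanup b (oadd zero _) = zero
                 rw [cleanup_oadd, if_pos (by simpa using hb)]; exact ih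

lemma toNF_oadd (e r : T) : toNF (oadd e r) = oadd (toNF e) (cleanup (o e) (toNF r)) := rfl

lemma toNF_term (n : ℕ) : toNF (rep zero zero n) = rep zero zero n := by
  induction n with
  | zero => rfl
  | succ n ih =>
    show toNF (oadd zero _) = _
    rw [toNF_oadd, ih]
    show oadd zero (cleanup 0 _) = _
    rw [cleanup_zero]
    rfl

lemma toNF_NF_id : ∀ (t : T), NF t → toNF t = t := by
  intro t
  induction t with
  | zero => intro _; rfl
  | oadd e r ihe ihr =>
    intro h
    obtain ⟨h1, h2, h3⟩ := h
    rw [toNF_oadd, ihe h1, ihr h2]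
    cases r with
    | zero => rfl
    | oadd f s => rw [cleanup_keep h3]

lemma NF_oadd_head {e f r : T} {s : T} (h : NF (oadd e (oadd f s))) : o e ≤ o f := h.2.2

lemma NF_rep {e2 r : T} (he2 : NF e2) (hr : NF r)
    (hhead : ∀ f s, r = oadd f s → o e2 ≤ o f) (x : ℕ) : NF (rep e2 r x) := by
  induction x with
  | zero => exact hr
  | succ x ih =>
    refine ⟨he2, ih, ?_⟩
    cases x with
    | zero =>
      cases r with
      | zero => trivial
      | oadd f s => exact hhead f s rfl
    | succ x => exact le_refl _

lemma NF_fund : ∀ (t : T), NF t → ∀ x, NF (fund t x) := by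
  intro t
  induction t with
  | zero => intro _ _; trivial
  | oadd e r ihe ihr =>
    intro h x
    obtain ⟨h1, h2, h3⟩ := h
    cases e with
    | zero => exact h2
    | oadd e1 e2 =>
      cases e1 with
      | zero =>
        simp only [fund_limS]
        refine NF_rep h1.2.1 h2 ?_ x
        intro f s hr
        subst hr
        calc o e2 ≤ o e2 + omega0 ^ o zero := le_self_add
        _ ≤ o f := h3
      | oadd a b =>
        simp only [fund_limL]
        refine ⟨ihe h1 x, h2, ?_⟩
        cases r with
        | zero => trivial
        | oadd f s =>
          exact le_of_lt (lt_of_lt_of_le (o_fund_lt _ (by simp) x) h3)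

lemma beta_oadd (e r : T) : Beta (oadd e r) = oadd (toNF e) (cleanup (o e) (Beta r)) := rfl

lemma beta_zeroT : Beta zero = three := by
  show toNF three = three
  rw [three_eq, toNF_term]

lemma beta_succ (r : T) : Beta (oadd zero r) = oadd zero (Beta r) := by
  rw [beta_oadd]
  show oadd zero (cleanup 0 (Beta r)) = _
  rw [cleanup_zero]

lemma beta_of_pos : ∀ (r : T), NF r → ∀ f s, r = oadd f s → 0 < o f → Beta r = r := by
  intro r
  induction r with
  | zero =>
    intro _ f s h
    cases h
  | oadd f' s' ihf ihs =>
    intro hNF f s heq hpos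
    have hf : f' = f := by cases heq; rfl
    have hs : s' = s := by cases heq; rfl
    subst hf; subst hs
    obtain ⟨h1, h2, h3⟩ := hNF
    rw [beta_oadd, toNF_NF_id f' h1]
    cases s' with
    | zero =>
      rw [beta_zeroT, three_eq, cleanup_term hpos]
    | oadd g u =>
      have hg : 0 < o g := lt_of_lt_of_le hpos h3
      rw [ihs h2 g u rfl hg, cleanup_keep h3]

lemma cleanup_beta (r : T) (hNF : NF r) {b : Ordinal} (hb : 0 < b)
    (hhead : ∀ f s, r = oadd f s → b ≤ o f) :
    cleanup b (Beta r) = if r = zero then zero else r := by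
  cases r with
  | zero => rw [if_pos rfl, beta_zeroT, three_eq, cleanup_term hb]
  | oadd f s =>
    rw [if_neg (by simp)]
    have hf := hhead f s rfl
    rw [beta_of_pos _ hNF f s rfl (lt_of_lt_of_le hb hf), cleanup_keep hf]

lemma beta_rep_zero (r : T) (k : ℕ) : Beta (rep zero r k) = rep zero (Beta r) k := by
  induction k with
  | zero => rfl
  | succ k ih =>
    show Beta (oadd zero _) = _
    rw [beta_succ, ih]
    rfl

lemma beta_rep_pos (e2 r : T) (he2NF : NF e2) (he2 : e2 ≠ zero) (k : ℕ) :
    Beta (rep e2 r (k+1)) = rep e2 (cleanup (o e2) (Beta r)) (k+1) := by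
  induction k with
  | zero =>
    show Beta (oadd e2 r) = oadd e2 _
    rw [beta_oadd, toNF_NF_id e2 he2NF]
    rfl
  | succ k ih =>
    show Beta (oadd e2 (rep e2 r (k+1))) = _
    rw [beta_oadd, toNF_NF_id e2 he2NF, ih]
    show oadd e2 (cleanup (o e2) (oadd e2 _)) = _
    rw [cleanup_keep (le_refl _)]
    rfl

lemma beta_fund (e r : T) (hNF : NF (oadd e r)) (he : e ≠ zero)
    (hex : ¬(e = oadd zero zero ∧ r = zero)) (m : ℕ) (hm : 1 ≤ m) :
    Beta (fund (oadd e r) m) = fund (Beta (oadd e r)) m := by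
  obtain ⟨h1, h2, h3⟩ := hNF
  have hhead : ∀ f s, r = oadd f s → o e ≤ o f := by
    intro f s hr; subst hr; exact h3
  have hbeta : Beta (oadd e r) = oadd e (cleanup (o e) (Beta r)) := by
    rw [beta_oadd, toNF_NF_id e h1]
  have hc : cleanup (o e) (Beta r) = if r = zero then zero else r :=
    cleanup_beta r h2 (o_pos he) hhead
  cases e with
  | zero => exact absurd rfl he
  | oadd e1 e2 =>
    cases e1 with
    | zero =>
      -- successor exponent: e = e2 + 1
      rw [hbeta]
      simp only [fund_limS]
      cases he2 : e2 with
      | zero =>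
        -- e = 1, so r ≠ zero
        have hrne : r ≠ zero := fun hrz => hex ⟨by rw [he2], hrz⟩
        obtain ⟨f, s, rfl⟩ : ∃ f s, r = oadd f s := by
          cases r with
          | zero => exact absurd rfl hrne
          | oadd f s => exact ⟨f, s, rfl⟩
        have h5 : o (oadd (zero:T) (zero:T)) ≤ o f := by
          have := hhead f s rfl
          rwa [he2] at this
        have hf : (0:Ordinal) < o f := lt_of_lt_of_le (o_pos (by simp)) h5
        rw [beta_rep_zero, beta_of_pos _ h2 f s rfl hf, cleanup_keep h5]
      | oadd g1 g2 =>
        -- e2 ≠ 0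
        rw [← he2]
        have he2ne : e2 ≠ zero := by rw [he2]; simp
        have he2NF : NF e2 := h1.2.1
        obtain ⟨k, rfl⟩ : ∃ k, m = k + 1 := ⟨m - 1, by omega⟩
        rw [beta_rep_pos e2 r he2NF he2ne k]
        congr 1
        rw [hc]
        refine cleanup_beta r h2 (o_pos he2ne) ?_
        intro f s hr
        have := hhead f s hr
        calc o e2 ≤ o e2 + omega0 ^ o zero := le_self_add
        _ ≤ o f := this
    | oadd a b =>
      -- limit exponent
      rw [hbeta]
      simp only [fund_limL]
      rw [beta_oadd, toNF_NF_id _ (NF_fund _ h1 m)]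
      congr 1
      have hfne : fund (oadd (oadd a b) e2) m ≠ zero :=
        fund_ne_zero _ (by show True; trivial) m hm
      rw [hc]
      refine cleanup_beta r h2 (o_pos hfne) ?_
      intro f s hr
      have h4 := hhead f s hr
      exact le_of_lt (lt_of_lt_of_le (o_fund_lt _ (by simp) m) h4)

end T
open T

lemma iter_congr {f f' : ℕ → ℕ} (h : ∀ a, f a = f' a) (k : ℕ) (a : ℕ) :
    f^[k] a = f'^[k] a := by
  induction k generalizing a with
  | zero => rfl
  | succ k ih => rw [Function.iterate_succ_apply, Function.iterate_succ_apply, h, ih]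

lemma H_term (n z : ℕ) : H (rep T.zero T.zero n) z = z + n := by
  induction n generalizing z with
  | zero => simp [rep]
  | succ n ih =>
    show H (oadd T.zero _) z = _
    rw [H_succ, ih]
    omega

lemma H_rep_pow (u : T) (k z : ℕ) :
    H (rep u T.zero k) z = (fun w => H (oadd u T.zero) w)^[k] z := by
  induction k generalizing z with
  | zero => simp [rep]
  | succ k ih =>
    show H (oadd u (rep u T.zero k)) z = _
    have he : oadd u (rep u T.zero k) = addT (rep u T.zero k) (oadd u T.zero) := rfl
    rw [he, H_addT _ (o (oadd u T.zero)) _ rfl, ih, Function.iterate_succ_apply]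

lemma H_omega1 (z : ℕ) : H (oadd (oadd T.zero T.zero) T.zero) z = z + z := by
  rw [H_lim (by simp)]
  show H (rep T.zero T.zero z) z = _
  rw [H_term]

lemma double_iter (k a : ℕ) : (fun w => w + w)^[k] a = 2^k * a := by
  induction k generalizing a with
  | zero => simp
  | succ k ih => rw [Function.iterate_succ_apply, ih]; ring

lemma H_omega2 (z : ℕ) :
    H (oadd (oadd T.zero (oadd T.zero T.zero)) T.zero) z = 2^z * z := by
  rw [H_lim (by simp)]
  show H (rep (oadd T.zero T.zero) T.zero z) z = _
  rw [H_rep_pow]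
  rw [iter_congr H_omega1 z z, double_iter]

lemma H_omega3 (z : ℕ) :
    H (oadd three T.zero) z = (fun w => 2^w * w)^[z] z := by
  rw [H_lim (by simp [three])]
  show H (rep (oadd T.zero (oadd T.zero T.zero)) T.zero z) z = _
  rw [H_rep_pow, iter_congr H_omega2 z z]

section Glemmas

local notation "g" => (fun w : ℕ => 2^w * w)

lemma g_ge (w : ℕ) : w ≤ g w :=
  Nat.le_mul_of_pos_left w (Nat.pow_pos (by norm_num))

lemma g_mono {a b : ℕ} (h : a ≤ b) : g a ≤ g b :=
  Nat.mul_le_mul (Nat.pow_le_pow_right (by norm_num) h) h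

lemma g_iter_ge (k w : ℕ) : w ≤ g^[k] w := iter_ge g_ge k w

lemma g_iter_superexp {w : ℕ} (hw : 1 ≤ w) (k : ℕ) : superexp w k ≤ g^[k] w := by
  induction k with
  | zero => simp
  | succ k ih =>
    rw [Function.iterate_succ_apply']
    set a := g^[k] w with ha
    have ha1 : 1 ≤ a := hw.trans (g_iter_ge k w)
    calc superexp w (k+1) = 2 ^ superexp w k := rfl
    _ ≤ 2 ^ a := Nat.pow_le_pow_right (by norm_num) ih
    _ = 2 ^ a * 1 := by ring
    _ ≤ 2 ^ a * a := Nat.mul_le_mul_left _ ha1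
    _ = g a := rfl

lemma g_iter_le {w : ℕ} (hw : 2 ≤ w) (k : ℕ) : 2 * g^[k] w ≤ superexp (2*w) k := by
  induction k with
  | zero => simp
  | succ k ih =>
    rw [Function.iterate_succ_apply']
    set a := g^[k] w with ha
    have ha2 : 2 ≤ a := hw.trans (g_iter_ge k w)
    calc 2 * g a = 2 ^ a * (2 * a) := by ring
    _ ≤ 2 ^ a * 2 ^ a := Nat.mul_le_mul_left _ (two_mul_le_two_pow ha2)
    _ = 2 ^ (2 * a) := by rw [← pow_add]; ring_nf
    _ ≤ 2 ^ superexp (2*w) k := Nat.pow_le_pow_right (by norm_num) ih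
    _ = superexp (2*w) (k+1) := rfl

end Glemmas
open T

lemma le_H' (t : T) (x : ℕ) : x ≤ H t x := le_H (o t) t rfl x

lemma rep_rep (e r : T) (j k : ℕ) : rep e (rep e r j) k = rep e r (j + k) := by
  induction k with
  | zero => rfl
  | succ k ih => show oadd e _ = oadd e _; rw [ih]; rfl

lemma MAIN : ∀ (γ : Ordinal) (α : T), α.o = γ → NF α →
    ∀ x, (F α x + 3 ≤ H (oadd (Beta α) T.zero) (x+3)) ∧
         (H (oadd (Beta α) T.zero) (x+3) + 1 ≤ F α (x+4)) := by
  intro γ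
  induction γ using Ordinal.induction with
  | h γ IH =>
    intro α ht hNF x
    cases α with
    | zero =>
      rw [beta_zeroT, F_zero, F_zero, H_omega3]
      constructor
      · have h1 : superexp (x+3) (x+3) ≤ (fun w => 2^w * w)^[x+3] (x+3) :=
          g_iter_superexp (by omega) (x+3)
        have h2 : superexp x (x+3) ≤ superexp (x+3) (x+3) :=
          superexp_mono_x (by omega) (x+3)
        have h3 : superexp x (x+3) = 2^(2^(2^(superexp x x))) := rfl
        have t1 : superexp x x < 2^(superexp x x) := (superexp x x).lt_two_pow_self
        have t2 : 2^(superexp x x) < 2^(2^(superexp x x)) := (2^(superexp x x)).lt_two_pow_self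
        have t3 : 2^(2^(superexp x x)) < 2^(2^(2^(superexp x x))) := (2^(2^(superexp x x))).lt_two_pow_self
        omega
      · have h2 : 2 * (fun w => 2^w * w)^[x+3] (x+3) ≤ superexp (2*(x+3)) (x+3) :=
          g_iter_le (by omega) (x+3)
        have h3 : superexp (2*(x+3)) (x+3) ≤ superexp (x+4) (x+4) := by
          have hb : 2*(x+3) ≤ 2^(x+4) := by
            have := two_mul_le_two_pow (a := x+4) (by omega)
            omega
          exact superexp_shift hb (x+3)
        have h4 : x + 3 ≤ (fun w => 2^w * w)^[x+3] (x+3) := g_iter_ge (x+3) (x+3)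
        omega
    | oadd e r =>
      cases e with
      | zero =>
        -- successor case
        have hNFr : NF r := hNF.2.1
        have hlt : o r < γ := by rw [← ht]; exact o_fund_lt (oadd T.zero r) (by simp) 0
        have ihr := IH (o r) hlt r rfl hNFr
        rw [beta_succ, F_succ, F_succ]
        have hH : H (oadd (oadd T.zero (Beta r)) T.zero) (x+3)
            = (fun w => H (oadd (Beta r) T.zero) w)^[x+3] (x+3) := by
          rw [H_lim (by simp)]
          show H (rep (Beta r) T.zero (x+3)) (x+3) = _
          rw [H_rep_pow]
        rw [hH]
        have Gge : ∀ w, w ≤ H (oadd (Beta r) T.zero) w := fun w => le_H' _ w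
        have Gmono : ∀ {a b : ℕ}, a ≤ b →
            H (oadd (Beta r) T.zero) a ≤ H (oadd (Beta r) T.zero) b :=
          fun h => H_mono _ h
        constructor
        · have claim1 : ∀ k w, (F r)^[k] w + 3 ≤ (fun w => H (oadd (Beta r) T.zero) w)^[k] (w+3) := by
            intro k
            induction k with
            | zero => intro w; simp
            | succ k ihk =>
              intro w
              rw [Function.iterate_succ_apply', Function.iterate_succ_apply']
              calc F r ((F r)^[k] w) + 3 ≤ H (oadd (Beta r) T.zero) ((F r)^[k] w + 3) :=
                (ihr ((F r)^[k] w)).1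
              _ ≤ H (oadd (Beta r) T.zero) ((fun w => H (oadd (Beta r) T.zero) w)^[k] (w+3)) :=
                Gmono (ihk w)
          calc (F r)^[x] x + 3 ≤ (fun w => H (oadd (Beta r) T.zero) w)^[x] (x+3) := claim1 x x
          _ ≤ (fun w => H (oadd (Beta r) T.zero) w)^[x+3] (x+3) :=
            iter_count_mono Gge (by omega) (x+3)
        · have claim2 : ∀ k, (fun w => H (oadd (Beta r) T.zero) w)^[k] (x+3) + 1
              ≤ (F r)^[k+1] (x+4) := by
            intro k
            induction k with
            | zero =>
              show x + 3 + 1 ≤ (F r)^[1] (x+4)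
              simpa using Nat.lt_of_lt_of_le (by omega : x + 3 < x + 4) (le_F' r (x+4))
            | succ k ihk =>
              rw [Function.iterate_succ_apply']
              rw [Function.iterate_succ_apply' (F r) (k+1)]
              set a := (fun w => H (oadd (Beta r) T.zero) w)^[k] (x+3) with ha
              have ha3 : x + 3 ≤ a := iter_ge Gge k (x+3)
              obtain ⟨y, hy⟩ : ∃ y, a = y + 3 := ⟨a - 3, by omega⟩
              calc H (oadd (Beta r) T.zero) a + 1 ≤ F r (a + 1) := by
                    rw [hy]
                    have := (ihr y).2
                    have h4 : y + 4 = y + 3 + 1 := by omega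
                    rw [h4] at this
                    exact this
              _ ≤ F r ((F r)^[k+1] (x+4)) := F_mono r (by omega)
          exact claim2 (x+3)
      | oadd e1 e2 =>
        -- limit case
        have heNF : NF (oadd e1 e2) := hNF.1
        by_cases hω : e1 = T.zero ∧ e2 = T.zero ∧ r = T.zero
        · obtain ⟨rfl, rfl, rfl⟩ := hω
          -- α = ω
          have hBα : Beta (oadd (oadd T.zero T.zero) T.zero)
              = oadd (oadd T.zero T.zero) T.zero := by
            rw [beta_oadd, toNF_NF_id _ heNF, beta_zeroT, three_eq, cleanup_term]
            show (0:Ordinal) < o (oadd T.zero T.zero)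
            exact o_pos (by simp)
          set δ := rep T.zero T.zero x with hδ
          have hδfund : fund (oadd (oadd T.zero T.zero) T.zero) x = δ := rfl
          have hδNF : NF δ := by rw [← hδfund]; exact NF_fund _ hNF x
          have hδlt : o δ < γ := by
            rw [← ht, ← hδfund]; exact o_fund_lt _ (by simp) x
          have ihδ := IH (o δ) hδlt δ rfl hδNF x
          have hBδ : Beta δ = rep T.zero T.zero (x+3) := by
            rw [hδ, beta_rep_zero, beta_zeroT, three_eq, rep_rep, Nat.add_comm]
          have hHeq : H (oadd (Beta (oadd (oadd T.zero T.zero) T.zero)) T.zero) (x+3)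
              = H (oadd (Beta δ) T.zero) (x+3) := by
            rw [hBα, hBδ, H_lim (by simp)]
            rfl
          constructor
          · rw [F_lim (by simp), hδfund, hHeq]
            exact ihδ.1
          · rw [F_lim (by simp) T.zero (x+4), hHeq]
            refine ihδ.2.trans ?_
            refine F_le_of_le ?_ (le_refl (x+4))
            show le (x+4) δ (fund (oadd (oadd T.zero T.zero) T.zero) (x+4))
            exact le_rep T.zero T.zero (by omega) (x+4)
        · -- generic limit case
          have hex : ¬(oadd e1 e2 = oadd T.zero T.zero ∧ r = T.zero) := by
            intro ⟨h1, h2⟩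
            apply hω
            refine ⟨?_, ?_, h2⟩ <;> · cases h1; rfl
          set δ := fund (oadd (oadd e1 e2) r) (x+3) with hδ
          have hδNF : NF δ := NF_fund _ hNF (x+3)
          have hδlt : o δ < γ := by rw [← ht]; exact o_fund_lt _ (by simp) (x+3)
          have ihδ := IH (o δ) hδlt δ rfl hδNF x
          have hbf : Beta δ = fund (Beta (oadd (oadd e1 e2) r)) (x+3) :=
            beta_fund (oadd e1 e2) r hNF (by simp) hex (x+3) (by omega)
          have hBα : Beta (oadd (oadd e1 e2) r)
              = oadd (oadd e1 e2) (cleanup (o (oadd e1 e2)) (Beta r)) := by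
            rw [beta_oadd, toNF_NF_id _ heNF]
          have hHeq : H (oadd (Beta (oadd (oadd e1 e2) r)) T.zero) (x+3)
              = H (oadd (Beta δ) T.zero) (x+3) := by
            conv_lhs => rw [hBα]
            rw [H_lim (by rw [← hBα]; simp [hBα])]
            rw [fund_limL]
            rw [← hBα, ← hbf]
          constructor
          · cases x with
            | zero =>
              rw [F_arg_zero (o (oadd (oadd e1 e2) r)) _ rfl]
              exact le_H' _ 3
            | succ x' =>
              rw [hHeq, F_lim (by simp)]
              have h1 : F (fund (oadd (oadd e1 e2) r) (x'+1)) (x'+1) ≤ F δ (x'+1) := by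
                refine F_le_of_le ?_ (le_refl _)
                rw [hδ]
                exact le_fund_fund _ (by omega) (by omega)
              calc F (fund (oadd (oadd e1 e2) r) (x'+1)) (x'+1) + 3
                  ≤ F δ (x'+1) + 3 := by omega
              _ ≤ _ := ihδ.1
          · rw [hHeq, F_lim (by simp) r (x+4)]
            refine ihδ.2.trans ?_
            refine F_le_of_le ?_ (le_refl (x+4))
            rw [hδ]
            exact le_fund_fund _ (by omega) (by omega)

/-- For every ordinal `α < ε₀` (given by its Cantor normal
form term): if `F_α` is total then `H_{ω^{3+α}}` is total, and
`F_α(x) ≤ H_{ω^{3+α}}(x+3) ≤ F_α(x+4)` for all `x`, whenever defined. -/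
theorem fastGrowing_hardy_comparison (α : T) (hα : T.NF α) :
    ((∀ x, ∃ y, FG α x y) → ∀ x, ∃ z, HG (wexp3 α) x z) ∧
    (∀ x y z, FG α x y → HG (wexp3 α) (x + 3) z → y ≤ z) ∧
    (∀ x z w, HG (wexp3 α) (x + 3) z → FG α (x + 4) w → z ≤ w) := by
  refine ⟨fun _ x => ⟨H (wexp3 α) x, HG_H _ x⟩, ?_, ?_⟩
  · intro x y z hF hH
    have hy : y = F α x := FG_eq_F hF
    have hz : z = H (wexp3 α) (x+3) := HG_eq_H hH
    have := (MAIN (T.o α) α rfl hα x).1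
    rw [wexp3_eq] at hz
    omega
  · intro x z w hH hF
    have hw : w = F α (x+4) := FG_eq_F hF
    have hz : z = H (wexp3 α) (x+3) := HG_eq_H hH
    have := (MAIN (T.o α) α rfl hα x).2
    rw [wexp3_eq] at hz
    omega
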